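/- Let A, B ∈ R^{m×m} be symmetric positive semidefinite and let C ∈ R^{m×m} be such that the 2m×2m block matrix [[A, C],[Cᵀ, B]] is positive semidefinite. Then for every k with 1 ≤ k ≤ m, Σ_{j=1}^k σ_j(C) ≤ √(Σ_{j=1}^k λ_j(A)) · √(Σ_{j=1}^k λ_j(B)). In particular, if A and B are nonzero, the quantity ρ := (Σ_{j=1}^k σ_j(C)) / (√(Σ_{j=1}^k λ_j(A)) · √(Σ_{j=1}^k λ_j(B))) satisfies 0 ≤ ρ ≤ 1. -/

import Mathlib

open Matrix MeasureTheory ProbabilityTheory Filter Finset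
open scoped BigOperators Topology
open Finset Matrix
open scoped RealInnerProductSpace

noncomputable section

/-- i-th largest eigenvalue (descending order, `λ_i`) of a real square matrix
(junk value 0 if the matrix is not symmetric). -/
def eigsDesc {m : ℕ} (M : Matrix (Fin m) (Fin m) ℝ) : Fin m → ℝ :=
  if h : M.IsHermitian then
    fun i => (h.eigenvalues ∘ Tuple.sort h.eigenvalues) i.rev
  else 0

/-- i-th largest singular value of a real square matrix:  `σ_i(C) = √(λ_i(CᵀC))`. -/
def svals {m : ℕ} (C : Matrix (Fin m) (Fin m) ℝ) : Fin m → ℝ :=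
  fun i => Real.sqrt (eigsDesc (Cᵀ * C) i)

/-- squared Frobenius norm -/
def frobSq {m n : ℕ} (C : Matrix (Fin m) (Fin n) ℝ) : ℝ :=
  ∑ i, ∑ j, (C i j) ^ 2

/-- Frobenius norm -/
def frobNorm {m n : ℕ} (C : Matrix (Fin m) (Fin n) ℝ) : ℝ :=
  Real.sqrt (frobSq C)

lemma inner_eq_dot {m : ℕ} (x y : EuclideanSpace ℝ (Fin m)) :
    ⟪x, y⟫ = (x : Fin m → ℝ) ⬝ᵥ y := by
  simp [PiLp.inner_apply, dotProduct, RCLike.inner_apply]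
  exact Finset.sum_congr rfl fun _ _ => mul_comm _ _

lemma mulVec_dot_mulVec {ι κ : Type*} [Fintype ι] [Fintype κ] (M N : Matrix ι κ ℝ)
    (x y : κ → ℝ) : (M *ᵥ x) ⬝ᵥ (N *ᵥ y) = x ⬝ᵥ ((Mᵀ * N) *ᵥ y) := by
  conv_rhs => rw [← mulVec_mulVec, dotProduct_mulVec, vecMul_transpose]

lemma dot_mulVec_symm {m : ℕ} (A : Matrix (Fin m) (Fin m) ℝ) (hA : Aᵀ = A)
    (x y : Fin m → ℝ) : (A *ᵥ x) ⬝ᵥ y = x ⬝ᵥ (A *ᵥ y) := by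
  conv_rhs => rw [dotProduct_mulVec, ← hA, vecMul_transpose]

lemma exists_eigbasis {m : ℕ} (M : Matrix (Fin m) (Fin m) ℝ) (hM : M.IsHermitian) :
    ∃ b : OrthonormalBasis (Fin m) ℝ (EuclideanSpace ℝ (Fin m)),
      ∀ j, M *ᵥ (b j : Fin m → ℝ) = eigsDesc M j • (b j : Fin m → ℝ) := by
  refine ⟨hM.eigenvectorBasis.reindex ((Fin.revPerm.trans (Tuple.sort hM.eigenvalues))).symm,
    fun j => ?_⟩
  rw [OrthonormalBasis.reindex_apply]
  simp only [eigsDesc, dif_pos hM, Equiv.symm_symm, Equiv.trans_apply, Fin.revPerm_apply,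
    Function.comp_apply]
  exact hM.mulVec_eigenvectorBasis _

lemma eigsDesc_antitone {m : ℕ} (M : Matrix (Fin m) (Fin m) ℝ) (hM : M.IsHermitian) :
    Antitone (eigsDesc M) := by
  intro i j hij
  simp only [eigsDesc, dif_pos hM]
  exact Tuple.monotone_sort hM.eigenvalues (Fin.rev_le_rev.mpr hij)

lemma eigsDesc_nonneg {m : ℕ} {M : Matrix (Fin m) (Fin m) ℝ} (hM : M.PosSemidef)
    (i : Fin m) : 0 ≤ eigsDesc M i := by
  simp only [eigsDesc, dif_pos hM.1]
  exact hM.eigenvalues_nonneg _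

lemma card_filter_lt {m k : ℕ} (hk : k ≤ m) :
    (univ.filter (fun j : Fin m => (j : ℕ) < k)).card = k := by
  have : (univ.filter (fun j : Fin m => (j : ℕ) < k)) = univ.map (Fin.castLEEmb hk) := by
    ext j
    simp only [mem_filter, mem_univ, true_and, Finset.mem_map, Fin.castLEEmb_apply]
    constructor
    · intro hj; exact ⟨⟨j, hj⟩, rfl⟩
    · rintro ⟨i, rfl⟩; simpa using i.isLt
  rw [this, card_map, card_univ, Fintype.card_fin]

lemma sum_mul_le_topk {m k : ℕ} (hk : k ≤ m) (d t : Fin m → ℝ) (hd : Antitone d)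
    (hd0 : ∀ i, 0 ≤ d i) (ht0 : ∀ i, 0 ≤ t i) (ht1 : ∀ i, t i ≤ 1)
    (hsum : ∑ i, t i ≤ (k : ℝ)) :
    ∑ i, d i * t i ≤ ∑ i ∈ univ.filter (fun j : Fin m => (j : ℕ) < k), d i := by
  rcases eq_or_lt_of_le hk with rfl | hkm
  · have hKu : (univ.filter (fun j : Fin k => (j : ℕ) < k)) = univ := by
      ext j; simp [j.isLt]
    rw [hKu]
    exact Finset.sum_le_sum fun i _ => mul_le_of_le_one_right (hd0 i) (ht1 i)
  · set c := d ⟨k, hkm⟩ with hc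
    have hc0 : 0 ≤ c := hd0 _
    have hsplit := Finset.sum_filter_add_sum_filter_not univ
      (fun j : Fin m => (j : ℕ) < k) (fun i => d i * t i)
    have hsplit' := Finset.sum_filter_add_sum_filter_not univ
      (fun j : Fin m => (j : ℕ) < k) t
    have h1 : ∑ i ∈ univ.filter (fun j : Fin m => (j : ℕ) < k), d i * t i
        ≤ ∑ i ∈ univ.filter (fun j : Fin m => (j : ℕ) < k), (d i + c * t i - c) := by
      refine Finset.sum_le_sum fun i hi => ?_
      have hik : (i : ℕ) < k := by simpa using hi
      have hdc : c ≤ d i := hd (Fin.le_def.mpr (le_of_lt hik))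
      nlinarith [ht1 i, ht0 i]
    have h2 : ∑ i ∈ univ.filter (fun j : Fin m => ¬ (j : ℕ) < k), d i * t i
        ≤ ∑ i ∈ univ.filter (fun j : Fin m => ¬ (j : ℕ) < k), c * t i := by
      refine Finset.sum_le_sum fun i hi => ?_
      have hik : k ≤ (i : ℕ) := by simpa using (mem_filter.mp hi).2
      exact mul_le_mul_of_nonneg_right (hd (Fin.le_def.mpr hik)) (ht0 i)
    have e1 : ∑ i ∈ univ.filter (fun j : Fin m => (j : ℕ) < k), (d i + c * t i - c)
        = ∑ i ∈ univ.filter (fun j : Fin m => (j : ℕ) < k), d i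
          + c * ∑ i ∈ univ.filter (fun j : Fin m => (j : ℕ) < k), t i - c * k := by
      rw [Finset.sum_sub_distrib, Finset.sum_add_distrib, Finset.sum_const,
        card_filter_lt (le_of_lt hkm), ← Finset.mul_sum, nsmul_eq_mul]
      ring
    have e2 : c * ∑ i ∈ univ.filter (fun j : Fin m => (j : ℕ) < k), t i
        + c * ∑ i ∈ univ.filter (fun j : Fin m => ¬ (j : ℕ) < k), t i ≤ c * k := by
      rw [← mul_add, hsplit']
      exact mul_le_mul_of_nonneg_left hsum hc0
    rw [← Finset.mul_sum] at h2
    linarith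

lemma kyFan {m k : ℕ} (hk : k ≤ m) {A : Matrix (Fin m) (Fin m) ℝ} (hA : A.PosSemidef)
    (S : Finset (Fin m)) (hScard : S.card ≤ k) (w : Fin m → (Fin m → ℝ))
    (hw : ∀ i ∈ S, ∀ j ∈ S, w i ⬝ᵥ w j = if i = j then 1 else 0) :
    ∑ j ∈ S, w j ⬝ᵥ (A *ᵥ w j)
      ≤ ∑ j ∈ univ.filter (fun j : Fin m => (j : ℕ) < k), eigsDesc A j := by
  obtain ⟨b, hb⟩ := exists_eigbasis A hA.1
  have hAsymm : Aᵀ = A := by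
    rw [← conjTranspose_eq_transpose_of_trivial]; exact hA.1
  set w' : Fin m → EuclideanSpace ℝ (Fin m) := fun j => WithLp.toLp 2 (w j) with hw'
  have key : ∀ j, w j ⬝ᵥ (A *ᵥ w j) = ∑ i, eigsDesc A i * (⟪b i, w' j⟫) ^ 2 := by
    intro j
    have h1 : w j ⬝ᵥ (A *ᵥ w j)
        = ⟪w' j, WithLp.toLp 2 (A *ᵥ w j)⟫ :=
      (inner_eq_dot (w' j) (WithLp.toLp 2 (A *ᵥ w j))).symm
    rw [h1, ← OrthonormalBasis.sum_inner_mul_inner b]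
    refine Finset.sum_congr rfl fun i _ => ?_
    have h2 : ⟪b i, WithLp.toLp 2 (A *ᵥ w j)⟫
        = eigsDesc A i * ⟪b i, w' j⟫ := by
      rw [inner_eq_dot, inner_eq_dot, WithLp.ofLp_toLp, ← dot_mulVec_symm A hAsymm, hb i,
        smul_dotProduct]
      rfl
    rw [h2, real_inner_comm (w' j) (b i)]
    ring
  have hsum1 : ∑ j ∈ S, w j ⬝ᵥ (A *ᵥ w j)
      = ∑ i, eigsDesc A i * (∑ j ∈ S, (⟪b i, w' j⟫) ^ 2) := by
    simp_rw [key, Finset.mul_sum]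
    exact Finset.sum_comm
  rw [hsum1]
  refine sum_mul_le_topk hk _ _ (eigsDesc_antitone A hA.1) (eigsDesc_nonneg hA)
    (fun i => Finset.sum_nonneg fun j _ => sq_nonneg _) (fun i => ?_) ?_
  · -- Bessel
    have horth : Orthonormal ℝ (fun j : {x // x ∈ S} => w' j) := by
      rw [orthonormal_iff_ite]
      rintro ⟨i, hi⟩ ⟨j, hj⟩
      rw [inner_eq_dot]
      rw [show ((w' i : Fin m → ℝ) ⬝ᵥ w' j) = w i ⬝ᵥ w j from rfl, hw i hi j hj]
      simp [Subtype.ext_iff]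
    have hb1 : ‖b i‖ = 1 := b.orthonormal.1 i
    calc ∑ j ∈ S, (⟪b i, w' j⟫) ^ 2
        = ∑ j : {x // x ∈ S}, ‖⟪w' j, b i⟫‖ ^ 2 := by
          rw [← Finset.sum_coe_sort S (fun j => (⟪b i, w' j⟫) ^ 2)]
          refine Finset.sum_congr rfl fun j _ => ?_
          rw [real_inner_comm, Real.norm_eq_abs, sq_abs]
      _ ≤ ‖b i‖ ^ 2 := horth.sum_inner_products_le (b i)
      _ = 1 := by rw [hb1]; norm_num
  · -- total mass
    have hone : ∀ j ∈ S, ∑ i, (⟪b i, w' j⟫) ^ 2 = 1 := by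
      intro j hj
      have := OrthonormalBasis.sum_inner_mul_inner b (w' j) (w' j)
      have hww : (⟪w' j, w' j⟫ : ℝ) = 1 := by
        rw [inner_eq_dot]
        rw [show ((w' j : Fin m → ℝ) ⬝ᵥ w' j) = w j ⬝ᵥ w j from rfl, hw j hj j hj]
        simp
      rw [hww] at this
      rw [← this]
      refine Finset.sum_congr rfl fun i _ => ?_
      rw [real_inner_comm (w' j) (b i)]
      ring
    rw [Finset.sum_comm]
    calc ∑ j ∈ S, ∑ i, (⟪b i, w' j⟫) ^ 2 = ∑ j ∈ S, (1 : ℝ) :=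
          Finset.sum_congr rfl hone
      _ = S.card := by simp
      _ ≤ k := by exact_mod_cast hScard

lemma dot_self_nonneg {ι : Type*} [Fintype ι] (x : ι → ℝ) : 0 ≤ x ⬝ᵥ x :=
  Finset.sum_nonneg fun i _ => mul_self_nonneg _

lemma dot_le_sqrt {ι : Type*} [Fintype ι] (x y : ι → ℝ) :
    x ⬝ᵥ y ≤ Real.sqrt (x ⬝ᵥ x) * Real.sqrt (y ⬝ᵥ y) := by
  have h2 : (x ⬝ᵥ y) ^ 2 ≤ (x ⬝ᵥ x) * (y ⬝ᵥ y) := by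
    simpa [dotProduct, pow_two] using Finset.sum_mul_sq_le_sq_mul_sq univ x y
  calc x ⬝ᵥ y ≤ |x ⬝ᵥ y| := le_abs_self _
    _ = Real.sqrt ((x ⬝ᵥ y) ^ 2) := (Real.sqrt_sq_eq_abs _).symm
    _ ≤ Real.sqrt ((x ⬝ᵥ x) * (y ⬝ᵥ y)) := Real.sqrt_le_sqrt h2
    _ = Real.sqrt (x ⬝ᵥ x) * Real.sqrt (y ⬝ᵥ y) := Real.sqrt_mul (dot_self_nonneg x) _


/-- If the block matrix `[[A, C],[Cᵀ, B]]` is positive semidefinite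
(with `A, B` symmetric psd), then `Σ_{j=1}^k σ_j(C) ≤ √(Σ_{j=1}^k λ_j(A)) · √(Σ_{j=1}^k λ_j(B))`
for every `1 ≤ k ≤ m`; in particular, if `A` and `B` are nonzero, the correlation
`ρ = Σσ_j(C) / (√Σλ_j(A) · √Σλ_j(B))` satisfies `0 ≤ ρ ≤ 1`. -/
theorem correlation_parameter_bounds (m : ℕ) (A B C : Matrix (Fin m) (Fin m) ℝ)
    (hA : A.PosSemidef) (hB : B.PosSemidef)
    (hblock : (Matrix.fromBlocks A C Cᵀ B).PosSemidef) :
    (∀ k : ℕ, 1 ≤ k → k ≤ m →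
      ∑ j ∈ Finset.univ.filter (fun j : Fin m => (j : ℕ) < k), svals C j
        ≤ Real.sqrt (∑ j ∈ Finset.univ.filter (fun j : Fin m => (j : ℕ) < k), eigsDesc A j) *
          Real.sqrt (∑ j ∈ Finset.univ.filter (fun j : Fin m => (j : ℕ) < k), eigsDesc B j)) ∧
    (A ≠ 0 → B ≠ 0 → ∀ k : ℕ, 1 ≤ k → k ≤ m →
      0 ≤ (∑ j ∈ Finset.univ.filter (fun j : Fin m => (j : ℕ) < k), svals C j) /
            (Real.sqrt (∑ j ∈ Finset.univ.filter (fun j : Fin m => (j : ℕ) < k), eigsDesc A j) *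
             Real.sqrt (∑ j ∈ Finset.univ.filter (fun j : Fin m => (j : ℕ) < k), eigsDesc B j)) ∧
      (∑ j ∈ Finset.univ.filter (fun j : Fin m => (j : ℕ) < k), svals C j) /
            (Real.sqrt (∑ j ∈ Finset.univ.filter (fun j : Fin m => (j : ℕ) < k), eigsDesc A j) *
             Real.sqrt (∑ j ∈ Finset.univ.filter (fun j : Fin m => (j : ℕ) < k), eigsDesc B j))
          ≤ 1) := by
  have main : ∀ k : ℕ, 1 ≤ k → k ≤ m →
      ∑ j ∈ Finset.univ.filter (fun j : Fin m => (j : ℕ) < k), svals C j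
        ≤ Real.sqrt (∑ j ∈ Finset.univ.filter (fun j : Fin m => (j : ℕ) < k), eigsDesc A j) *
          Real.sqrt (∑ j ∈ Finset.univ.filter (fun j : Fin m => (j : ℕ) < k), eigsDesc B j) := by
    intro k _ hk
    set K := univ.filter (fun j : Fin m => (j : ℕ) < k) with hK
    -- eigendata of CᵀC
    have hN : (Cᵀ * C).PosSemidef := by
      rw [← conjTranspose_eq_transpose_of_trivial]
      exact posSemidef_conjTranspose_mul_self C
    obtain ⟨bN, hbN⟩ := exists_eigbasis (Cᵀ * C) hN.1
    set v : Fin m → (Fin m → ℝ) := fun j => (bN j : Fin m → ℝ) with hv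
    have hvv : ∀ i j, v i ⬝ᵥ v j = if i = j then 1 else 0 := by
      intro i j
      have h := (orthonormal_iff_ite.mp bN.orthonormal) i j
      rw [inner_eq_dot] at h
      exact h
    set σ : Fin m → ℝ := svals C with hσ
    have hσ0 : ∀ j, 0 ≤ σ j := fun j => Real.sqrt_nonneg _
    have hσsq : ∀ j, σ j ^ 2 = eigsDesc (Cᵀ * C) j := fun j =>
      Real.sq_sqrt (eigsDesc_nonneg hN j)
    have hCv : ∀ i j, (C *ᵥ v i) ⬝ᵥ (C *ᵥ v j)
        = eigsDesc (Cᵀ * C) j * (if i = j then 1 else 0) := by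
      intro i j
      rw [mulVec_dot_mulVec, hbN j, dotProduct_smul, hvv i j, smul_eq_mul]
    set S := K.filter (fun j => σ j ≠ 0) with hS
    have hSsub : S ⊆ K := filter_subset _ _
    have hScard : S.card ≤ k := by
      calc S.card ≤ K.card := card_le_card hSsub
        _ = k := card_filter_lt hk
    set u : Fin m → (Fin m → ℝ) := fun j => (σ j)⁻¹ • (C *ᵥ v j) with hu
    have huu : ∀ i ∈ S, ∀ j ∈ S, u i ⬝ᵥ u j = if i = j then 1 else 0 := by
      intro i hi j hj
      have hσi : σ i ≠ 0 := (mem_filter.mp hi).2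
      have hσj : σ j ≠ 0 := (mem_filter.mp hj).2
      show ((σ i)⁻¹ • (C *ᵥ v i)) ⬝ᵥ ((σ j)⁻¹ • (C *ᵥ v j)) = _
      rw [smul_dotProduct, dotProduct_smul, hCv i j]
      by_cases hij : i = j
      · subst hij
        simp only [if_pos rfl, ← hσsq i, smul_eq_mul]
        field_simp
      · simp [hij]
    have huCv : ∀ j ∈ S, u j ⬝ᵥ (C *ᵥ v j) = σ j := by
      intro j hj
      have hσj : σ j ≠ 0 := (mem_filter.mp hj).2
      show ((σ j)⁻¹ • (C *ᵥ v j)) ⬝ᵥ (C *ᵥ v j) = σ j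
      rw [smul_dotProduct, hCv j j]
      simp only [if_pos rfl, ↓reduceIte, ← hσsq j, smul_eq_mul]
      field_simp
    -- block factorization
    obtain ⟨L, hL, hLh⟩ : ∃ L : Matrix (Fin m ⊕ Fin m) (Fin m ⊕ Fin m) ℝ,
        L * L = Matrix.fromBlocks A C Cᵀ B ∧ Lᵀ = L := by
      open scoped MatrixOrder in
      exact ⟨CFC.sqrt _, CFC.sqrt_mul_sqrt_self _ hblock.nonneg,
        by rw [← conjTranspose_eq_transpose_of_trivial]; exact (CFC.sqrt_nonneg _).posSemidef.1⟩
    have hLs : ∀ a b, L a b = L b a := by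
      intro a b
      conv_lhs => rw [← hLh, transpose_apply]
    have factor : ∀ p q, (∑ i, L i p * L i q) = (Matrix.fromBlocks A C Cᵀ B) p q := by
      intro p q
      rw [← hL, mul_apply]
      exact Finset.sum_congr rfl fun i _ => by rw [hLs i p]
    set L₁ := L.submatrix id Sum.inl with hL₁
    set L₂ := L.submatrix id Sum.inr with hL₂
    have hC12 : L₁ᵀ * L₂ = C := by
      ext p q
      rw [mul_apply]
      simp only [hL₁, hL₂, transpose_apply, submatrix_apply, id]
      rw [factor (Sum.inl p) (Sum.inr q)]
      simp [Matrix.fromBlocks]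
    have hA12 : L₁ᵀ * L₁ = A := by
      ext p q
      rw [mul_apply]
      simp only [hL₁, transpose_apply, submatrix_apply, id]
      rw [factor (Sum.inl p) (Sum.inl q)]
      simp [Matrix.fromBlocks]
    have hB12 : L₂ᵀ * L₂ = B := by
      ext p q
      rw [mul_apply]
      simp only [hL₂, transpose_apply, submatrix_apply, id]
      rw [factor (Sum.inr p) (Sum.inr q)]
      simp [Matrix.fromBlocks]
    set f : Fin m → ℝ := fun j => u j ⬝ᵥ (A *ᵥ u j) with hf
    set g : Fin m → ℝ := fun j => v j ⬝ᵥ (B *ᵥ v j) with hg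
    have hfL : ∀ j, (L₁ *ᵥ u j) ⬝ᵥ (L₁ *ᵥ u j) = f j := by
      intro j; rw [mulVec_dot_mulVec, hA12]
    have hgL : ∀ j, (L₂ *ᵥ v j) ⬝ᵥ (L₂ *ᵥ v j) = g j := by
      intro j; rw [mulVec_dot_mulVec, hB12]
    have hf0 : ∀ j, 0 ≤ f j := fun j => (hfL j) ▸ dot_self_nonneg _
    have hg0 : ∀ j, 0 ≤ g j := fun j => (hgL j) ▸ dot_self_nonneg _
    have hterm : ∀ j ∈ S, σ j ≤ Real.sqrt (f j) * Real.sqrt (g j) := by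
      intro j hj
      have h1 : σ j = (L₁ *ᵥ u j) ⬝ᵥ (L₂ *ᵥ v j) := by
        rw [mulVec_dot_mulVec, hC12]
        exact (huCv j hj).symm
      rw [h1, ← hfL j, ← hgL j]
      exact dot_le_sqrt _ _
    -- assemble
    have step1 : ∑ j ∈ K, σ j = ∑ j ∈ S, σ j := by
      refine (Finset.sum_subset hSsub fun j hj hjn => ?_).symm
      by_contra h
      exact hjn (mem_filter.mpr ⟨hj, h⟩)
    have step2 : ∑ j ∈ S, σ j ≤ ∑ j ∈ S, Real.sqrt (f j) * Real.sqrt (g j) :=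
      Finset.sum_le_sum hterm
    have step3 : ∑ j ∈ S, Real.sqrt (f j) * Real.sqrt (g j)
        ≤ Real.sqrt (∑ j ∈ S, f j) * Real.sqrt (∑ j ∈ S, g j) := by
      have hsq := Finset.sum_sq_le_sum_mul_sum_of_sq_eq_mul S
        (r := fun j => Real.sqrt (f j) * Real.sqrt (g j)) (f := f) (g := g)
        (fun j _ => hf0 j) (fun j _ => hg0 j)
        (fun j _ => by rw [mul_pow, Real.sq_sqrt (hf0 j), Real.sq_sqrt (hg0 j)])
      have hr0 : 0 ≤ ∑ j ∈ S, Real.sqrt (f j) * Real.sqrt (g j) :=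
        Finset.sum_nonneg fun j _ => mul_nonneg (Real.sqrt_nonneg _) (Real.sqrt_nonneg _)
      calc ∑ j ∈ S, Real.sqrt (f j) * Real.sqrt (g j)
          = Real.sqrt ((∑ j ∈ S, Real.sqrt (f j) * Real.sqrt (g j)) ^ 2) :=
            (Real.sqrt_sq hr0).symm
        _ ≤ Real.sqrt ((∑ j ∈ S, f j) * (∑ j ∈ S, g j)) := Real.sqrt_le_sqrt hsq
        _ = Real.sqrt (∑ j ∈ S, f j) * Real.sqrt (∑ j ∈ S, g j) :=
            Real.sqrt_mul (Finset.sum_nonneg fun j _ => hf0 j) _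
    have stepA : ∑ j ∈ S, f j ≤ ∑ j ∈ K, eigsDesc A j :=
      kyFan hk hA S hScard u huu
    have stepB : ∑ j ∈ S, g j ≤ ∑ j ∈ K, eigsDesc B j :=
      kyFan hk hB S hScard v (fun i _ j _ => hvv i j)
    calc ∑ j ∈ K, σ j = ∑ j ∈ S, σ j := step1
      _ ≤ ∑ j ∈ S, Real.sqrt (f j) * Real.sqrt (g j) := step2
      _ ≤ Real.sqrt (∑ j ∈ S, f j) * Real.sqrt (∑ j ∈ S, g j) := step3
      _ ≤ Real.sqrt (∑ j ∈ K, eigsDesc A j) * Real.sqrt (∑ j ∈ K, eigsDesc B j) := by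
          exact mul_le_mul (Real.sqrt_le_sqrt stepA) (Real.sqrt_le_sqrt stepB)
            (Real.sqrt_nonneg _) (Real.sqrt_nonneg _)
  refine ⟨main, fun _ _ k hk1 hk => ?_⟩
  have h := main k hk1 hk
  have hden : 0 ≤ Real.sqrt (∑ j ∈ Finset.univ.filter (fun j : Fin m => (j : ℕ) < k), eigsDesc A j) *
      Real.sqrt (∑ j ∈ Finset.univ.filter (fun j : Fin m => (j : ℕ) < k), eigsDesc B j) :=
    mul_nonneg (Real.sqrt_nonneg _) (Real.sqrt_nonneg _)
  have hnum : 0 ≤ ∑ j ∈ Finset.univ.filter (fun j : Fin m => (j : ℕ) < k), svals C j :=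
    Finset.sum_nonneg fun j _ => Real.sqrt_nonneg _
  exact ⟨div_nonneg hnum hden, div_le_one_of_le₀ h hden⟩
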